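/- Let k be a field of prime characteristic p with p ≡ 2 (mod 7). Then for every nonnegative integer e, the dimension over k of k[X,Y]/(X^{p^e}, Y^{p^e}, X^7 − Y^7) equals 7·p^e − 6 if e ≡ 0 (mod 3), equals 7·p^e − 10 if e ≡ 1 (mod 3), and equals 7·p^e − 12 if e ≡ 2 (mod 3). -/

import Mathlib

open MvPolynomial

set_option synthInstance.maxHeartbeats 1000000
set_option maxHeartbeats 1000000

namespace Stmt6Aux
noncomputable section
variable {k : Type*} [Field k]

def mkd (a b : ℕ) : Fin 2 →₀ ℕ := Finsupp.single 0 a + Finsupp.single 1 b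
@[simp] lemma mkd_apply0 (a b : ℕ) : mkd a b 0 = a := by simp [mkd]
@[simp] lemma mkd_apply1 (a b : ℕ) : mkd a b 1 = b := by simp [mkd]
lemma eq_mkd (d : Fin 2 →₀ ℕ) : d = mkd (d 0) (d 1) := by
  ext i
  match i with
  | 0 => simp
  | 1 => simp
lemma monomial_mkd (a b : ℕ) :
    (monomial (mkd a b) (1 : k)) = X 0 ^ a * X 1 ^ b := by
  rw [X_pow_eq_monomial, X_pow_eq_monomial, monomial_mul, mul_one, mkd]
def E (q s c j : ℕ) : ℕ := if j < c then q else 7 * s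
def idx (q s c : ℕ) : Type := Σ j : Fin 7, Fin (E q s c (j : ℕ))
instance (q s c : ℕ) : Fintype (idx q s c) := by unfold idx; infer_instance
def psi (q s c : ℕ) (d : Fin 2 →₀ ℕ) : idx q s c → k :=
  fun x => if ((x.1 : ℕ) = (d 0) % 7 ∧ (x.2 : ℕ) = d 1 + 7 * (d 0 / 7)) then 1 else 0
def phi (q s c : ℕ) : MvPolynomial (Fin 2) k →ₗ[k] (idx q s c → k) :=
  (basisMonomials (Fin 2) k).constr k (psi q s c)
lemma phi_monomial (q s c : ℕ) (d : Fin 2 →₀ ℕ) :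
    phi (k := k) q s c (monomial d 1) = psi q s c d := by
  have : (monomial d (1:k)) = basisMonomials (Fin 2) k d := by
    rw [coe_basisMonomials]
  rw [this, phi, Module.Basis.constr_basis]
lemma phi_X (q s c : ℕ) (a b : ℕ) :
    phi (k := k) q s c (X 0 ^ a * X 1 ^ b) = psi q s c (mkd a b) := by
  rw [← monomial_mkd, phi_monomial]

-- generic lifting: if phi kills g * every monomial, it kills g * everything
lemma kill_of_monomial (q s c : ℕ) (g : MvPolynomial (Fin 2) k)
    (h : ∀ a b : ℕ, phi (k := k) q s c (g * (X 0 ^ a * X 1 ^ b)) = 0) :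
    ∀ u, phi (k := k) q s c (g * u) = 0 := by
  have : (phi (k := k) q s c).comp (LinearMap.mulLeft k g) = 0 := by
    apply (basisMonomials (Fin 2) k).ext
    intro d
    rw [coe_basisMonomials]
    simp only [LinearMap.comp_apply, LinearMap.mulLeft_apply, LinearMap.zero_apply]
    rw [eq_mkd d, monomial_mkd]
    exact h _ _
  intro u
  have := congrArg (fun f => f u) (congrArg (fun f => f.toFun) this)
  simpa using this

variable (q s c : ℕ) (hq : q = 7 * s + c) (hc1 : 1 ≤ c) (hc7 : c < 7)

include hq hc1 hc7 in
lemma kill_f : ∀ u, phi (k := k) q s c ((X 0 ^ 7 - X 1 ^ 7) * u) = 0 := by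
  apply kill_of_monomial
  intro a b
  have expand : ((X 0 : MvPolynomial (Fin 2) k) ^ 7 - X 1 ^ 7) * (X 0 ^ a * X 1 ^ b)
      = X 0 ^ (a + 7) * X 1 ^ b - X 0 ^ a * X 1 ^ (b + 7) := by ring
  rw [expand, map_sub, phi_X, phi_X]
  funext x
  simp only [psi, mkd_apply0, mkd_apply1, Pi.sub_apply, Pi.zero_apply]
  have hiff : ((x.1 : ℕ) = (a + 7) % 7 ∧ (x.2 : ℕ) = b + 7 * ((a + 7) / 7))
      ↔ ((x.1 : ℕ) = a % 7 ∧ (x.2 : ℕ) = (b + 7) + 7 * (a / 7)) := by omega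
  rw [if_congr hiff rfl rfl, sub_self]

include hq hc1 hc7 in
lemma kill_x : ∀ u, phi (k := k) q s c (X 0 ^ q * u) = 0 := by
  apply kill_of_monomial
  intro a b
  have expand : (X 0 : MvPolynomial (Fin 2) k) ^ q * (X 0 ^ a * X 1 ^ b)
      = X 0 ^ (q + a) * X 1 ^ b := by ring
  rw [expand, phi_X]
  funext x
  obtain ⟨⟨j, hj⟩, ⟨i, hi⟩⟩ := x
  simp only [psi, mkd_apply0, mkd_apply1, Pi.zero_apply]
  rw [if_neg]
  · rfl
  rintro ⟨h1, h2⟩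
  simp only [E] at hi
  by_cases hjc : j < c <;> simp [hjc] at hi <;> omega

include hq hc1 hc7 in
lemma kill_y : ∀ u, phi (k := k) q s c (X 1 ^ q * u) = 0 := by
  apply kill_of_monomial
  intro a b
  have expand : (X 1 : MvPolynomial (Fin 2) k) ^ q * (X 0 ^ a * X 1 ^ b)
      = X 0 ^ a * X 1 ^ (b + q) := by ring
  rw [expand, phi_X]
  funext x
  obtain ⟨⟨j, hj⟩, ⟨i, hi⟩⟩ := x
  simp only [psi, mkd_apply0, mkd_apply1, Pi.zero_apply]
  rw [if_neg]
  · rfl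
  rintro ⟨h1, h2⟩
  simp only [E] at hi
  by_cases hjc : j < c <;> simp [hjc] at hi <;> omega


/-- the ideal -/
def I (q : ℕ) : Ideal (MvPolynomial (Fin 2) k) :=
  Ideal.span {(X 0 : MvPolynomial (Fin 2) k) ^ q, X 1 ^ q, X 0 ^ 7 - X 1 ^ 7}

include hq hc1 hc7 in
lemma phi_ker : ∀ x ∈ I (k := k) q, phi (k := k) q s c x = 0 := by
  intro x hx
  rw [I] at hx
  rw [show ({(X 0 : MvPolynomial (Fin 2) k) ^ q, X 1 ^ q, X 0 ^ 7 - X 1 ^ 7} : Set _)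
      = insert (X 0 ^ q) (insert (X 1 ^ q) {X 0 ^ 7 - X 1 ^ 7}) from rfl] at hx
  rw [Ideal.mem_span_insert] at hx
  obtain ⟨u, z, hz, rfl⟩ := hx
  rw [Ideal.mem_span_insert] at hz
  obtain ⟨v, w, hw, rfl⟩ := hz
  rw [Ideal.mem_span_singleton'] at hw
  obtain ⟨t, rfl⟩ := hw
  rw [map_add, map_add]
  rw [mul_comm u, mul_comm v, mul_comm t]
  rw [kill_x q s c hq hc1 hc7, kill_y q s c hq hc1 hc7, kill_f q s c hq hc1 hc7 t]
  simp

/-- the induced map on the quotient -/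
def phibar : (MvPolynomial (Fin 2) k ⧸ I (k := k) q) →ₗ[k] (idx q s c → k) :=
  (Submodule.liftQ ((I (k := k) q).restrictScalars k) (phi q s c)
    (fun x hx => phi_ker q s c hq hc1 hc7 x hx)).comp
    (Submodule.Quotient.restrictScalarsEquiv k (I (k := k) q)).symm.toLinearMap

lemma phibar_mk (x : MvPolynomial (Fin 2) k) :
    phibar (k := k) q s c hq hc1 hc7 (Ideal.Quotient.mk (I (k := k) q) x) = phi q s c x := by
  rfl


instance (q s c : ℕ) : DecidableEq (idx q s c) := by unfold idx; infer_instance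

lemma card_idx (q s c : ℕ) : Fintype.card (idx q s c) = ∑ j : Fin 7, E q s c (j : ℕ) := by
  unfold idx
  rw [Fintype.card_sigma]
  simp

def F (q s c : ℕ) : idx q s c → MvPolynomial (Fin 2) k :=
  fun x => X 0 ^ (x.1 : ℕ) * X 1 ^ (x.2 : ℕ)

def Fbar (q s c : ℕ) : idx q s c → (MvPolynomial (Fin 2) k ⧸ I (k := k) q) :=
  fun x => Ideal.Quotient.mk _ (F (k := k) q s c x)

lemma idx_eq_iff {q s c : ℕ} (x y : idx q s c) :
    x = y ↔ ((x.1 : ℕ) = (y.1 : ℕ) ∧ (x.2 : ℕ) = (y.2 : ℕ)) := by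
  constructor
  · rintro rfl; exact ⟨rfl, rfl⟩
  · obtain ⟨j, i⟩ := x
    obtain ⟨j', i'⟩ := y
    rintro ⟨h1, h2⟩
    simp only at h1 h2
    have hj : j = j' := Fin.ext h1
    subst hj
    have hi : i = i' := Fin.ext h2
    subst hi
    rfl

lemma phi_F (x : idx q s c) :
    phi (k := k) q s c (F q s c x) = Pi.single x 1 := by
  rw [F, phi_X]
  funext y
  rw [Pi.single_apply]
  obtain ⟨⟨j, hj⟩, ⟨i, hi⟩⟩ := x
  obtain ⟨⟨j', hj'⟩, ⟨i', hi'⟩⟩ := y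
  simp only [psi, mkd_apply0, mkd_apply1]
  split_ifs with h1 h2 h2
  · rfl
  · exact absurd ((idx_eq_iff _ _).2 (by simp only; omega)) h2
  · exact absurd (by have := (idx_eq_iff _ _).1 h2; simp only at this; omega) h1
  · rfl

include hq hc1 hc7 in
lemma indep : LinearIndependent k (Fbar (k := k) q s c) := by
  have hcomp : (phibar (k := k) q s c hq hc1 hc7) ∘ (Fbar (k := k) q s c)
      = ⇑(Pi.basisFun k (idx q s c)) := by
    funext x
    rw [Function.comp_apply, Fbar, phibar_mk, phi_F, Pi.basisFun_apply]
  have h2 := (Pi.basisFun k (idx q s c)).linearIndependent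
  rw [← hcomp] at h2
  exact LinearIndependent.of_comp _ h2

include hq hc1 hc7 in
lemma mem_span_monomial : ∀ a b : ℕ,
    Ideal.Quotient.mk (I (k := k) q) (X 0 ^ a * X 1 ^ b)
      ∈ Submodule.span k (Set.range (Fbar (k := k) q s c)) := by
  intro a
  induction a using Nat.strong_induction_on with
  | _ a ih =>
    intro b
    by_cases h7 : 7 ≤ a
    · obtain ⟨a', rfl⟩ : ∃ a', a = a' + 7 := ⟨a - 7, by omega⟩
      have key : Ideal.Quotient.mk (I (k := k) q) (X 0 ^ (a' + 7) * X 1 ^ b)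
          = Ideal.Quotient.mk (I (k := k) q) (X 0 ^ a' * X 1 ^ (b + 7)) := by
        rw [Ideal.Quotient.eq]
        have : (X 0 : MvPolynomial (Fin 2) k) ^ (a' + 7) * X 1 ^ b
            - X 0 ^ a' * X 1 ^ (b + 7) = (X 0 ^ a' * X 1 ^ b) * (X 0 ^ 7 - X 1 ^ 7) := by
          ring
        rw [this]
        exact Ideal.mul_mem_left _ _ (Ideal.subset_span (by simp))
      rw [key]
      exact ih a' (by omega) (b + 7)
    · push_neg at h7
      by_cases hb : b < E q s c a
      · exact Submodule.subset_span ⟨⟨⟨a, h7⟩, ⟨b, hb⟩⟩, rfl⟩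
      · push_neg at hb
        have hmem : (X 0 : MvPolynomial (Fin 2) k) ^ a * X 1 ^ b ∈ I (k := k) q := by
          by_cases hac : a < c
          · have hbq : q ≤ b := by simpa [E, hac] using hb
            obtain ⟨b', rfl⟩ : ∃ b', b = b' + q := ⟨b - q, by omega⟩
            have : (X 0 : MvPolynomial (Fin 2) k) ^ a * X 1 ^ (b' + q)
                = (X 0 ^ a * X 1 ^ b') * X 1 ^ q := by ring
            rw [this]
            exact Ideal.mul_mem_left _ _ (Ideal.subset_span (by simp))
          · push_neg at hac
            have hbs : 7 * s ≤ b := by simpa [E, Nat.not_lt.2 hac] using hb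
            have hkey : (X 0 : MvPolynomial (Fin 2) k) ^ c * X 1 ^ (7 * s)
                ∈ I (k := k) q := by
              obtain ⟨u, hu⟩ :=
                sub_dvd_pow_sub_pow ((X 1 : MvPolynomial (Fin 2) k) ^ 7) (X 0 ^ 7) s
              have expand : (X 0 : MvPolynomial (Fin 2) k) ^ c * X 1 ^ (7 * s)
                  = X 0 ^ q + (-(X 0 ^ c * u)) * (X 0 ^ 7 - X 1 ^ 7) := by
                subst hq
                have h1 : (X 1 : MvPolynomial (Fin 2) k) ^ (7 * s) = (X 1 ^ 7) ^ s := by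
                  rw [← pow_mul]
                have h0 : (X 0 : MvPolynomial (Fin 2) k) ^ (7 * s + c)
                    = (X 0 ^ 7) ^ s * X 0 ^ c := by
                  rw [← pow_mul, ← pow_add]
                rw [h1, h0]
                linear_combination (X 0 : MvPolynomial (Fin 2) k) ^ c * hu
              rw [expand]
              exact Ideal.add_mem _ (Ideal.subset_span (by simp))
                (Ideal.mul_mem_left _ _ (Ideal.subset_span (by simp)))
            obtain ⟨a', rfl⟩ : ∃ a', a = a' + c := ⟨a - c, by omega⟩
            obtain ⟨b', rfl⟩ : ∃ b', b = b' + 7 * s := ⟨b - 7 * s, by omega⟩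
            have : (X 0 : MvPolynomial (Fin 2) k) ^ (a' + c) * X 1 ^ (b' + 7 * s)
                = (X 0 ^ a' * X 1 ^ b') * (X 0 ^ c * X 1 ^ (7 * s)) := by ring
            rw [this]
            exact Ideal.mul_mem_left _ _ hkey
        rw [Ideal.Quotient.eq_zero_iff_mem.2 hmem]
        exact Submodule.zero_mem _

include hq hc1 hc7 in
lemma span_top : ⊤ ≤ Submodule.span k (Set.range (Fbar (k := k) q s c)) := by
  rintro x -
  obtain ⟨f, rfl⟩ := Ideal.Quotient.mk_surjective x
  induction f using MvPolynomial.induction_on' with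
  | monomial d a =>
    have hsm : (Ideal.Quotient.mk (I (k := k) q)) (monomial d a)
        = a • (Ideal.Quotient.mk (I (k := k) q)) (monomial d 1) := by
      rw [show ((monomial d) a : MvPolynomial (Fin 2) k) = a • ((monomial d) 1) by
          rw [smul_monomial, smul_eq_mul, mul_one],
        ← Ideal.Quotient.mkₐ_eq_mk k, map_smul]
    rw [hsm]
    refine Submodule.smul_mem _ _ ?_
    rw [eq_mkd d, monomial_mkd]
    exact mem_span_monomial q s c hq hc1 hc7 _ _
  | add p q' hp hq' =>
    rw [map_add]
    exact Submodule.add_mem _ hp hq'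

include hq hc1 hc7 in
lemma finrank_I : Module.finrank k (MvPolynomial (Fin 2) k ⧸ I (k := k) q)
    = ∑ j : Fin 7, E q s c (j : ℕ) := by
  have b : Module.Basis (idx q s c) k (MvPolynomial (Fin 2) k ⧸ I (k := k) q) :=
    Module.Basis.mk (indep q s c hq hc1 hc7) (span_top q s c hq hc1 hc7)
  rw [Module.finrank_eq_card_basis b, card_idx]

end
end Stmt6Aux


open Stmt6Aux

/-- The period-3 example: for `p ≡ 2 (mod 7)`, the `k`-dimension of
`k[X,Y]/(X^{p^e}, Y^{p^e}, X^7 - Y^7)` is `7p^e - 6`, `7p^e - 10`, or `7p^e - 12`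
according as `e ≡ 0, 1, 2 (mod 3)`. -/
theorem stmt6 {k : Type*} [Field k] (p : ℕ) (hp : p.Prime) [CharP k p]
    (hpmod : p % 7 = 2) (e : ℕ) :
    (e % 3 = 0 →
      (Module.finrank k (MvPolynomial (Fin 2) k ⧸
        Ideal.span {(X 0 : MvPolynomial (Fin 2) k) ^ p ^ e, X 1 ^ p ^ e,
          X 0 ^ 7 - X 1 ^ 7}) : ℤ) = 7 * (p : ℤ) ^ e - 6) ∧
    (e % 3 = 1 →
      (Module.finrank k (MvPolynomial (Fin 2) k ⧸
        Ideal.span {(X 0 : MvPolynomial (Fin 2) k) ^ p ^ e, X 1 ^ p ^ e,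
          X 0 ^ 7 - X 1 ^ 7}) : ℤ) = 7 * (p : ℤ) ^ e - 10) ∧
    (e % 3 = 2 →
      (Module.finrank k (MvPolynomial (Fin 2) k ⧸
        Ideal.span {(X 0 : MvPolynomial (Fin 2) k) ^ p ^ e, X 1 ^ p ^ e,
          X 0 ^ 7 - X 1 ^ 7}) : ℤ) = 7 * (p : ℤ) ^ e - 12) := by
  have hspan : Ideal.span {(X 0 : MvPolynomial (Fin 2) k) ^ p ^ e, X 1 ^ p ^ e,
      X 0 ^ 7 - X 1 ^ 7} = I (k := k) (p ^ e) := rfl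
  have hq2 : p ^ e % 7 = 2 ^ (e % 3) % 7 := by
    have h1 : p ^ e % 7 = 2 ^ e % 7 := by rw [Nat.pow_mod, hpmod]
    rw [h1]
    conv_lhs => rw [show e = 3 * (e / 3) + e % 3 by omega]
    rw [pow_add, Nat.mul_mod, pow_mul, Nat.pow_mod]
    norm_num
  have hcast : ((p : ℤ)) ^ e = ((p ^ e : ℕ) : ℤ) := by push_cast; ring
  refine ⟨?_, ?_, ?_⟩ <;> intro he <;> rw [he] at hq2 <;> norm_num at hq2 <;>
    rw [hspan, hcast]
  · -- c = 1
    have hfr := finrank_I (k := k) (p ^ e) (p ^ e / 7) 1 (by omega) (by norm_num)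
      (by norm_num)
    rw [hfr, Fin.sum_univ_seven]
    simp only [E]
    norm_num
    omega
  · -- c = 2
    have hfr := finrank_I (k := k) (p ^ e) (p ^ e / 7) 2 (by omega) (by norm_num)
      (by norm_num)
    rw [hfr, Fin.sum_univ_seven]
    simp only [E]
    norm_num
    omega
  · -- c = 4
    have hfr := finrank_I (k := k) (p ^ e) (p ^ e / 7) 4 (by omega) (by norm_num)
      (by norm_num)
    rw [hfr, Fin.sum_univ_seven]
    simp only [E]
    norm_num
    omega
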